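/- For every k ∈ ℕ with k ≥ 1, every real x > 0, and every h ∈ ℂ with Re(h) > 1, the defining series of ζ_q(s, x | h) converge at s = 1 − k and ζ_q(1−k, x | h) = − β_{k,q}^h(x) / k. -/

import Mathlib

open Complex Finset Filter

/-- Complex power `q^z := exp(z·log q)` for a real base `q`. -/
noncomputable def qcpow (q : ℝ) (z : ℂ) : ℂ := Complex.exp (z * (Real.log q : ℂ))

/-- The complex `q`-number `[z]_q = (1 - q^z)/(1 - q)`. -/
noncomputable def qnum (q : ℝ) (z : ℂ) : ℂ := (1 - qcpow q z) / (1 - (q : ℂ))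

/-- The real `q`-number `[y]_q = (1 - q^y)/(1 - q)` for real `y`. -/
noncomputable def qnumR (q : ℝ) (y : ℝ) : ℝ := (1 - Real.exp (y * Real.log q)) / (1 - q)

/-- The `(h,q)`-Bernoulli polynomial
`β_{n,q}^h(x) = (1-q)^{-n} ∑_{l=0}^{n} C(n,l) (-1)^l q^{lx} (l+h-1)/[l+h-1]_q`. -/
noncomputable def qbeta (q : ℝ) (h : ℂ) (n : ℕ) (x : ℝ) : ℂ :=
  (1 - (q : ℂ))⁻¹ ^ n * ∑ l ∈ Finset.range (n + 1),
    (n.choose l : ℂ) * (-1) ^ l * qcpow q ((l : ℂ) * (x : ℂ)) *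
      (((l : ℂ) + h - 1) / qnum q ((l : ℂ) + h - 1))

/-- The Hurwitz-type `(h,q)`-zeta function
`ζ_q(s, x | h) = ∑ q^{hn+x}/[n+x]_q^s + ((h-1)(1-q)/(s-1)) ∑ q^{(h-1)n}/[n+x]_q^{s-1}`,
where `[n+x]_q^s = exp(s·log [n+x]_q)`. -/
noncomputable def hqZetaH (q : ℝ) (h s : ℂ) (x : ℝ) : ℂ :=
  (∑' n : ℕ, qcpow q (h * (n : ℂ) + (x : ℂ)) /
      Complex.exp (s * (Real.log (qnumR q ((n : ℝ) + x)) : ℂ))) +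
  ((h - 1) * (1 - (q : ℂ)) / (s - 1)) *
    ∑' n : ℕ, qcpow q ((h - 1) * (n : ℂ)) /
      Complex.exp ((s - 1) * (Real.log (qnumR q ((n : ℝ) + x)) : ℂ))

/-- The `(h,q)`-zeta function
`ζ_q(s | h) = ∑_{n≥1} q^{hn}/[n]_q^s + ((h-1)(1-q)/(s-1)) ∑_{n≥1} q^{(h-1)n}/[n]_q^{s-1}`. -/
noncomputable def hqZeta (q : ℝ) (h s : ℂ) : ℂ :=
  (∑' n : ℕ, qcpow q (h * ((n : ℂ) + 1)) /
      Complex.exp (s * (Real.log (qnumR q ((n : ℝ) + 1)) : ℂ))) +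
  ((h - 1) * (1 - (q : ℂ)) / (s - 1)) *
    ∑' n : ℕ, qcpow q ((h - 1) * ((n : ℂ) + 1)) /
      Complex.exp ((s - 1) * (Real.log (qnumR q ((n : ℝ) + 1)) : ℂ))

/- ### Auxiliary lemmas -/

lemma qcpow_add (q : ℝ) (a b : ℂ) : qcpow q (a + b) = qcpow q a * qcpow q b := by
  simp [qcpow, add_mul, Complex.exp_add]

lemma qcpow_nat_mul (q : ℝ) (z : ℂ) (n : ℕ) : qcpow q (z * n) = (qcpow q z) ^ n := by
  rw [qcpow, qcpow, mul_comm z (n:ℂ), mul_assoc, Complex.exp_nat_mul]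

lemma norm_qcpow (q : ℝ) (z : ℂ) : ‖qcpow q z‖ = Real.exp (z.re * Real.log q) := by
  rw [qcpow, Complex.norm_exp]
  congr 1
  simp [Complex.mul_re]

lemma norm_qcpow_lt_one {q : ℝ} (hq0 : 0 < q) (hq1 : q < 1) {z : ℂ} (hz : 0 < z.re) :
    ‖qcpow q z‖ < 1 := by
  rw [norm_qcpow]
  exact Real.exp_lt_one_iff.mpr (mul_neg_of_pos_of_neg hz (Real.log_neg hq0 hq1))

lemma qnumR_pos {q : ℝ} (hq0 : 0 < q) (hq1 : q < 1) {y : ℝ} (hy : 0 < y) : 0 < qnumR q y := by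
  apply div_pos
  · have : Real.exp (y * Real.log q) < 1 :=
      Real.exp_lt_one_iff.mpr (mul_neg_of_pos_of_neg hy (Real.log_neg hq0 hq1))
    linarith
  · linarith

lemma ofReal_qnumR (q : ℝ) (y : ℝ) :
    ((qnumR q y : ℝ) : ℂ) = (1 - qcpow q (y : ℂ)) / (1 - (q : ℂ)) := by
  unfold qnumR qcpow
  push_cast [Complex.ofReal_exp]
  norm_num

lemma exp_nat_log (r : ℝ) (hr : 0 < r) (m : ℕ) :
    Complex.exp ((m : ℂ) * (Real.log r : ℂ)) = ((r : ℂ)) ^ m := by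
  rw [Complex.exp_nat_mul, ← Complex.ofReal_exp, Real.exp_log hr]

lemma div_exp_neg_nat (A : ℂ) (r : ℝ) (hr : 0 < r) (m : ℕ) :
    A / Complex.exp ((-(m : ℂ)) * (Real.log r : ℂ)) = A * ((r : ℂ)) ^ m := by
  rw [neg_mul, Complex.exp_neg, exp_nat_log r hr]; field_simp

lemma master (q : ℝ) (hq0 : 0 < q) (hq1 : q < 1) (x : ℝ) (hx : 0 < x)
    (c : ℂ) (hc : 0 < c.re) (m : ℕ) :
    Summable (fun n : ℕ => qcpow q (c * (n : ℂ)) * (((qnumR q ((n : ℝ) + x)) : ℝ) : ℂ) ^ m) ∧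
    ∑' n : ℕ, qcpow q (c * (n : ℂ)) * (((qnumR q ((n : ℝ) + x)) : ℝ) : ℂ) ^ m
      = (1 - (q : ℂ))⁻¹ ^ m * ∑ l ∈ Finset.range (m + 1),
          (m.choose l : ℂ) * (-1) ^ l * qcpow q ((l : ℂ) * x) *
            (1 - qcpow q (c + (l : ℂ)))⁻¹ := by
  set g : ℕ → ℕ → ℂ := fun l n =>
    (1 - (q : ℂ))⁻¹ ^ m * ((m.choose l : ℂ) * (-1) ^ l * qcpow q ((l : ℂ) * x)) *
      (qcpow q (c + (l : ℂ))) ^ n with hg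
  have hratio : ∀ l : ℕ, ‖qcpow q (c + (l : ℂ))‖ < 1 := by
    intro l
    apply norm_qcpow_lt_one hq0 hq1
    simp only [Complex.add_re, Complex.natCast_re]
    positivity
  have hsumg : ∀ l ∈ Finset.range (m + 1), Summable (g l) := by
    intro l _
    exact (summable_geometric_of_norm_lt_one (hratio l)).mul_left _
  have key : ∀ n : ℕ, qcpow q (c * (n : ℂ)) * (((qnumR q ((n : ℝ) + x)) : ℝ) : ℂ) ^ m
      = ∑ l ∈ Finset.range (m + 1), g l n := by
    intro n
    have hnx : ((((n : ℝ) + x) : ℝ) : ℂ) = (n : ℂ) + (x : ℂ) := by push_cast; ring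
    rw [ofReal_qnumR, hnx, div_eq_mul_inv, mul_pow, ← neg_add_eq_sub, add_pow]
    rw [Finset.sum_mul, Finset.mul_sum]
    apply Finset.sum_congr rfl
    intro l _
    have e1 : (-qcpow q ((n : ℂ) + (x : ℂ))) ^ l
        = (-1) ^ l * qcpow q (((n : ℂ) + (x : ℂ)) * (l : ℂ)) := by
      rw [neg_pow, qcpow_nat_mul]
    have e2 : (qcpow q (c + (l : ℂ))) ^ n = qcpow q ((c + (l : ℂ)) * (n : ℂ)) := by
      rw [qcpow_nat_mul]
    rw [hg]
    simp only []
    rw [e1, e2]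
    have e3 : qcpow q (c * (n : ℂ)) * qcpow q (((n : ℂ) + (x : ℂ)) * (l : ℂ))
        = qcpow q ((l : ℂ) * (x : ℂ)) * qcpow q ((c + (l : ℂ)) * (n : ℂ)) := by
      rw [← qcpow_add, ← qcpow_add]
      congr 1
      ring
    calc qcpow q (c * (n : ℂ)) *
          ((-1) ^ l * qcpow q (((n : ℂ) + (x : ℂ)) * (l : ℂ)) * 1 ^ (m - l) * (m.choose l : ℂ) *
            ((1 - (q : ℂ))⁻¹) ^ m)
        = ((1 - (q : ℂ))⁻¹) ^ m * ((m.choose l : ℂ) * (-1) ^ l) *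
            (qcpow q (c * (n : ℂ)) * qcpow q (((n : ℂ) + (x : ℂ)) * (l : ℂ))) := by ring
      _ = _ := by rw [e3]; ring
  refine ⟨(summable_sum hsumg).congr (fun n => (key n).symm), ?_⟩
  rw [tsum_congr key, Summable.tsum_finsetSum hsumg, Finset.mul_sum]
  apply Finset.sum_congr rfl
  intro l _
  rw [hg]
  simp only []
  rw [tsum_mul_left, tsum_geometric_of_norm_lt_one (hratio l)]
  ring

lemma key_sum (j : ℕ) (w : ℂ) (P D : ℕ → ℂ) (hP : ∀ l, P (l + 1) = w * P l) :
    w * ∑ l ∈ Finset.range (j + 1), ((j.choose l : ℂ)) * (-1) ^ l * P l * D (l + 1)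
    = -(((j : ℂ) + 1)⁻¹) * ∑ l ∈ Finset.range (j + 2),
        (((j + 1).choose l : ℂ)) * (-1) ^ l * (l : ℂ) * P l * D l := by
  have hK : ((j : ℂ) + 1) ≠ 0 := Nat.cast_add_one_ne_zero j
  conv_rhs => rw [Finset.sum_range_succ']
  norm_num
  rw [Finset.mul_sum, Finset.mul_sum, ← Finset.sum_neg_distrib]
  apply Finset.sum_congr rfl
  intro l _
  have hch : ((j : ℂ) + 1) * (j.choose l : ℂ) = (((j + 1).choose (l + 1) : ℂ)) * ((l : ℂ) + 1) := by
    have := Nat.add_one_mul_choose_eq j l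
    have h2 : ((j.succ * j.choose l : ℕ) : ℂ) = ((j.succ.choose l.succ * l.succ : ℕ) : ℂ) := by
      exact_mod_cast congrArg (Nat.cast : ℕ → ℂ) this
    push_cast at h2
    convert h2 using 2 <;> push_cast <;> ring
  rw [hP l]
  push_cast
  field_simp
  linear_combination (w * (-1) ^ l * P l * D (l + 1)) * hch

/-- `ζ_q(1-k, x | h) = -β_{k,q}^h(x)/k` for `k ≥ 1`, with the defining
series converging at `s = 1-k`. -/
theorem hqZetaH_neg_nat (q : ℝ) (hq0 : 0 < q) (hq1 : q < 1)
    (h : ℂ) (hh : 1 < h.re) (k : ℕ) (hk : 1 ≤ k) (x : ℝ) (hx : 0 < x) :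
    Summable (fun n : ℕ => qcpow q (h * (n : ℂ) + (x : ℂ)) /
      Complex.exp ((1 - (k : ℂ)) * (Real.log (qnumR q ((n : ℝ) + x)) : ℂ))) ∧
    Summable (fun n : ℕ => qcpow q ((h - 1) * (n : ℂ)) /
      Complex.exp (((1 - (k : ℂ)) - 1) * (Real.log (qnumR q ((n : ℝ) + x)) : ℂ))) ∧
    hqZetaH q h (1 - (k : ℂ)) x = -qbeta q h k x / (k : ℂ) := by
  obtain ⟨j, rfl⟩ : ∃ j, k = j + 1 := ⟨k - 1, by omega⟩
  have hq : (1 - (q : ℂ)) ≠ 0 := by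
    intro e
    have hq' : (q : ℂ) = 1 := by linear_combination -e
    have : q = 1 := by exact_mod_cast hq'
    linarith
  have hhr : 0 < h.re := by linarith
  have hh1r : 0 < (h - 1).re := by
    simp only [Complex.sub_re, Complex.one_re]; linarith
  have hr : ∀ n : ℕ, 0 < qnumR q ((n : ℝ) + x) := fun n => qnumR_pos hq0 hq1 (by positivity)
  have M1 := master q hq0 hq1 x hx h hhr j
  have M2 := master q hq0 hq1 x hx (h - 1) hh1r (j + 1)
  have e1 : (1 - (((j + 1 : ℕ)) : ℂ)) = -((j : ℕ) : ℂ) := by push_cast; ring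
  have e2 : ((1 - (((j + 1 : ℕ)) : ℂ)) - 1) = -(((j + 1 : ℕ)) : ℂ) := by push_cast; ring
  have hF1 : ∀ n : ℕ, qcpow q (h * (n : ℂ) + (x : ℂ)) /
      Complex.exp ((1 - (((j + 1 : ℕ)) : ℂ)) * (Real.log (qnumR q ((n : ℝ) + x)) : ℂ))
      = qcpow q (h * (n : ℂ)) * (((qnumR q ((n : ℝ) + x)) : ℝ) : ℂ) ^ j * qcpow q (x : ℂ) := by
    intro n
    rw [e1, div_exp_neg_nat _ _ (hr n) j, qcpow_add]
    ring
  have hF2 : ∀ n : ℕ, qcpow q ((h - 1) * (n : ℂ)) /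
      Complex.exp (((1 - (((j + 1 : ℕ)) : ℂ)) - 1) * (Real.log (qnumR q ((n : ℝ) + x)) : ℂ))
      = qcpow q ((h - 1) * (n : ℂ)) * (((qnumR q ((n : ℝ) + x)) : ℝ) : ℂ) ^ (j + 1) := by
    intro n
    rw [e2, div_exp_neg_nat _ _ (hr n) (j + 1)]
  refine ⟨(M1.1.mul_right _).congr (fun n => (hF1 n).symm),
          M2.1.congr (fun n => (hF2 n).symm), ?_⟩
  unfold hqZetaH
  rw [tsum_congr hF1, tsum_congr hF2, tsum_mul_right, M1.2, M2.2]
  unfold qbeta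
  -- rewrite the first finite sum to use `D (l+1)`
  have hconv : (∑ l ∈ Finset.range (j + 1), (j.choose l : ℂ) * (-1) ^ l *
        qcpow q ((l : ℂ) * (x : ℂ)) * (1 - qcpow q (h + (l : ℂ)))⁻¹)
      = ∑ l ∈ Finset.range (j + 1), (j.choose l : ℂ) * (-1) ^ l *
        qcpow q ((l : ℂ) * (x : ℂ)) * (1 - qcpow q (h - 1 + ((l + 1 : ℕ) : ℂ)))⁻¹ := by
    apply Finset.sum_congr rfl
    intro l _
    have harg : h + (l : ℂ) = h - 1 + ((l + 1 : ℕ) : ℂ) := by push_cast; ring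
    rw [harg]
  -- rewrite the beta sum
  have hbeta : (∑ l ∈ Finset.range (j + 2), ((j + 1).choose l : ℂ) * (-1) ^ l *
        qcpow q ((l : ℂ) * (x : ℂ)) * (((l : ℂ) + h - 1) / qnum q ((l : ℂ) + h - 1)))
      = (h - 1) * (1 - (q : ℂ)) * (∑ l ∈ Finset.range (j + 2), ((j + 1).choose l : ℂ) * (-1) ^ l *
          qcpow q ((l : ℂ) * (x : ℂ)) * (1 - qcpow q (h - 1 + (l : ℂ)))⁻¹)
        + (1 - (q : ℂ)) * (∑ l ∈ Finset.range (j + 2), ((j + 1).choose l : ℂ) * (-1) ^ l *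
          ((l : ℂ)) * qcpow q ((l : ℂ) * (x : ℂ)) * (1 - qcpow q (h - 1 + (l : ℂ)))⁻¹) := by
    rw [Finset.mul_sum, Finset.mul_sum, ← Finset.sum_add_distrib]
    apply Finset.sum_congr rfl
    intro l _
    have harg : (l : ℂ) + h - 1 = h - 1 + (l : ℂ) := by ring
    simp only [qnum, harg]
    rw [div_div_eq_mul_div, div_eq_mul_inv]
    ring
  rw [hconv, hbeta]
  have hP : ∀ l : ℕ, qcpow q (((l + 1 : ℕ) : ℂ) * (x : ℂ))
      = qcpow q (x : ℂ) * qcpow q ((l : ℂ) * (x : ℂ)) := by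
    intro l
    rw [show ((l + 1 : ℕ) : ℂ) * (x : ℂ) = (x : ℂ) + (l : ℂ) * (x : ℂ) by push_cast; ring,
      qcpow_add]
  have hkey := key_sum j (qcpow q (x : ℂ)) (fun l => qcpow q ((l : ℂ) * (x : ℂ)))
    (fun l => (1 - qcpow q (h - 1 + (l : ℂ)))⁻¹) hP
  have hK : ((j : ℂ) + 1) ≠ 0 := Nat.cast_add_one_ne_zero j
  have hA : (1 - (q : ℂ))⁻¹ * (1 - (q : ℂ)) = 1 := inv_mul_cancel₀ hq
  have e4 : ((1 - (((j + 1 : ℕ)) : ℂ)) - 1) = -((j : ℂ) + 1) := by push_cast; ring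
  have e5 : (((j + 1 : ℕ)) : ℂ) = (j : ℂ) + 1 := by push_cast; ring
  rw [e4, e5, div_neg]
  linear_combination ((1 - (q : ℂ))⁻¹ ^ j) * hkey
    + (((j : ℂ) + 1)⁻¹ * (∑ l ∈ Finset.range (j + 2), ((j + 1).choose l : ℂ) * (-1) ^ l *
        ((l : ℂ)) * qcpow q ((l : ℂ) * (x : ℂ)) * (1 - qcpow q (h - 1 + (l : ℂ)))⁻¹) *
        (1 - (q : ℂ))⁻¹ ^ j) * hA
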